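/- Let μ ∈ (1/2, 1) and x, y > 0, and set a₁ = ((2−μ)/μ)·x, b₁ = ((1−μ)/μ)·√(x/y)·(1+x+y), c₁ = 1+x, t = (−b₁ + √(b₁² + 4a₁c₁)) / (2a₁), and α* = t². Then α* > 0 and the stationarity identity μ·√(xy/α*)·(1+(1−α*)x) = (1−μ)·x·(1+x+y+2√(α*xy)) holds; equivalently, the derivative of α ↦ (1−μ)·log₂(1+(1−α)x) + μ·log₂(1+x+y+2√(αxy)) vanishes at α = α* whenever α* < 1. -/

import Mathlib

lemma mode3_aux (μ x y a₁ b₁ c₁ t αst : ℝ)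
    (hμ1 : 1/2 < μ) (hμ2 : μ < 1) (hx : 0 < x) (hy : 0 < y)
    (ha : a₁ = (2 - μ) / μ * x)
    (hb : b₁ = (1 - μ) / μ * Real.sqrt (x / y) * (1 + x + y))
    (hc : c₁ = 1 + x)
    (ht : t = (-b₁ + Real.sqrt (b₁ ^ 2 + 4 * a₁ * c₁)) / (2 * a₁))
    (hαd : αst = t ^ 2) :
    0 < αst
    ∧ μ * Real.sqrt (x * y / αst) * (1 + (1 - αst) * x)
        = (1 - μ) * x * (1 + x + y + 2 * Real.sqrt (αst * x * y))
    ∧ (αst < 1 →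
        HasDerivAt
          (fun a : ℝ =>
            (1 - μ) * Real.logb 2 (1 + (1 - a) * x)
              + μ * Real.logb 2 (1 + x + y + 2 * Real.sqrt (a * x * y)))
          0 αst) := by
  have hμ0 : 0 < μ := by linarith
  have ha0 : 0 < a₁ := by
    rw [ha]; exact mul_pos (div_pos (by linarith) hμ0) hx
  have hb0 : 0 ≤ b₁ := by
    rw [hb]
    exact mul_nonneg (mul_nonneg (div_nonneg (by linarith) hμ0.le)
      (Real.sqrt_nonneg _)) (by linarith)
  have hc0 : 0 < c₁ := by rw [hc]; linarith
  have hD : (0:ℝ) ≤ b₁ ^ 2 + 4 * a₁ * c₁ := by positivity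
  have hs2 : Real.sqrt (b₁ ^ 2 + 4 * a₁ * c₁) ^ 2 = b₁ ^ 2 + 4 * a₁ * c₁ :=
    Real.sq_sqrt hD
  have hbs : b₁ < Real.sqrt (b₁ ^ 2 + 4 * a₁ * c₁) := by
    nlinarith [Real.sqrt_nonneg (b₁ ^ 2 + 4 * a₁ * c₁), mul_pos ha0 hc0]
  have ht0 : 0 < t := by rw [ht]; apply div_pos (by linarith) (by linarith)
  have hα0 : 0 < αst := by rw [hαd]; positivity
  -- quadratic relation
  have hq : a₁ * t ^ 2 + b₁ * t = c₁ := by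
    rw [ht]
    field_simp
    rw [show b₁ ^ 2 + a₁ * 4 * c₁ = b₁ ^ 2 + 4 * a₁ * c₁ by ring]
    nlinarith [hs2]
  clear ht hs2 hD hbs
  -- sqrt identities
  set S := Real.sqrt (x * y) with hSdef
  set Q := Real.sqrt (x / y) with hQdef
  have hS2 : S ^ 2 = x * y := Real.sq_sqrt (by positivity)
  have hS0 : 0 < S := Real.sqrt_pos.mpr (by positivity)
  have hsxy : Q * S = x := by
    rw [hQdef, hSdef, ← Real.sqrt_mul (by positivity)]
    rw [show x / y * (x * y) = x ^ 2 by field_simp]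
    exact Real.sqrt_sq hx.le
  have h1 : Real.sqrt (x * y / αst) = S / t := by
    rw [hSdef, hαd, Real.sqrt_div (by positivity), Real.sqrt_sq ht0.le]
  have h2 : Real.sqrt (αst * x * y) = t * S := by
    rw [hSdef, hαd, show t ^ 2 * x * y = t ^ 2 * (x * y) by ring,
      Real.sqrt_mul (sq_nonneg t), Real.sqrt_sq ht0.le]
  subst ha hb hc
  rw [div_mul_eq_mul_div, div_mul_eq_mul_div, div_mul_eq_mul_div] at hq
  have hq2 : (2 - μ) * x * t ^ 2 + (1 - μ) * Q * (1 + x + y) * t = μ * (1 + x) := by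
    field_simp at hq
    linarith [hq]
  have key : μ * S * (1 + (1 - αst) * x)
      = (1 - μ) * x * (1 + x + y + 2 * (t * S)) * t := by
    rw [hαd]
    linear_combination (-(S)) * hq2 + ((1 - μ) * (1 + x + y) * t) * hsxy
  have hid : μ * Real.sqrt (x * y / αst) * (1 + (1 - αst) * x)
      = (1 - μ) * x * (1 + x + y + 2 * Real.sqrt (αst * x * y)) := by
    rw [h1, h2]
    rw [show μ * (S / t) * (1 + (1 - αst) * x)
        = μ * S * (1 + (1 - αst) * x) / t from by ring,
      div_eq_iff ht0.ne']
    exact key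
  refine ⟨hα0, hid, ?_⟩
  intro hlt
  have p1 : 0 < 1 + (1 - αst) * x := by nlinarith
  have p2 : 0 < 1 + x + y + 2 * Real.sqrt (αst * x * y) := by
    have := Real.sqrt_nonneg (αst * x * y); linarith
  have hne : αst * x * y ≠ 0 := by positivity
  have hmul : HasDerivAt (fun a : ℝ => a * x * y) (x * y) αst := by
    simpa using ((hasDerivAt_id αst).mul_const x).mul_const y
  have hsq : HasDerivAt (fun a : ℝ => Real.sqrt (a * x * y))
      (1 / (2 * Real.sqrt (αst * x * y)) * (x * y)) αst :=
    (Real.hasDerivAt_sqrt hne).comp αst hmul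
  have hin2 : HasDerivAt (fun a : ℝ => 1 + x + y + 2 * Real.sqrt (a * x * y))
      (2 * (1 / (2 * Real.sqrt (αst * x * y)) * (x * y))) αst :=
    (hsq.const_mul 2).const_add (1 + x + y)
  have hin1 : HasDerivAt (fun a : ℝ => 1 + (1 - a) * x) (-1 * x) αst :=
    (((hasDerivAt_id αst).const_sub 1).mul_const x).const_add 1
  have hlog1 := hin1.log p1.ne'
  have hlog2 := hin2.log p2.ne'
  have H := ((hlog1.div_const (Real.log 2)).const_mul (1 - μ)).add
    ((hlog2.div_const (Real.log 2)).const_mul μ)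
  have hL2 : Real.log 2 ≠ 0 := (Real.log_pos (by norm_num)).ne'
  have p2' : 0 < 1 + x + y + 2 * (t * S) := by rwa [h2] at p2
  have hzero : (1 - μ) * (-1 * x / (1 + (1 - αst) * x) / Real.log 2)
      + μ * (2 * (1 / (2 * Real.sqrt (αst * x * y)) * (x * y))
          / (1 + x + y + 2 * Real.sqrt (αst * x * y)) / Real.log 2) = 0 := by
    rw [h2, ← hS2]
    have p1' : 1 + x * (1 - αst) ≠ 0 := by rw [mul_comm]; exact p1.ne'
    have p2'' : 1 + x + y + 2 * t * S ≠ 0 := by rw [mul_assoc]; exact p2'.ne'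
    field_simp
    linear_combination key
  simp only [Real.logb]
  rw [← hzero]
  exact H


/-- For `μ ∈ (1/2,1)` and `x, y > 0`, the value `α* = t²` with
`t = (−b₁+√(b₁²+4a₁c₁))/(2a₁)` (where `a₁ = ((2−μ)/μ)x`,
`b₁ = ((1−μ)/μ)√(x/y)(1+x+y)`, `c₁ = 1+x`) is positive and satisfies the
stationarity identity `μ√(xy/α*)(1+(1−α*)x) = (1−μ)x(1+x+y+2√(α*xy))`;
equivalently, the derivative of
`α ↦ (1−μ)·log₂(1+(1−α)x) + μ·log₂(1+x+y+2√(αxy))` vanishes at `α*`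
whenever `α* < 1`. -/
theorem mode3_K3_stationarity
    (μ x y : ℝ) (hμ : μ ∈ Set.Ioo (1/2 : ℝ) 1) (hx : 0 < x) (hy : 0 < y) :
    let a₁ : ℝ := (2 - μ) / μ * x
    let b₁ : ℝ := (1 - μ) / μ * Real.sqrt (x / y) * (1 + x + y)
    let c₁ : ℝ := 1 + x
    let t : ℝ := (-b₁ + Real.sqrt (b₁ ^ 2 + 4 * a₁ * c₁)) / (2 * a₁)
    let αstar : ℝ := t ^ 2
    0 < αstar
    ∧ μ * Real.sqrt (x * y / αstar) * (1 + (1 - αstar) * x)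
        = (1 - μ) * x * (1 + x + y + 2 * Real.sqrt (αstar * x * y))
    ∧ (αstar < 1 →
        HasDerivAt
          (fun a : ℝ =>
            (1 - μ) * Real.logb 2 (1 + (1 - a) * x)
              + μ * Real.logb 2 (1 + x + y + 2 * Real.sqrt (a * x * y)))
          0 αstar) := by
  intro a₁ b₁ c₁ t αstar
  exact mode3_aux μ x y a₁ b₁ c₁ t αstar hμ.1 hμ.2 hx hy rfl rfl rfl rfl rfl
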